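/- Let N1, N2 be Grassmann necklaces in C([n], r). Then Int(N1) ⊆ Int(N2) if and only if every set of the necklace N1 belongs to Int(N2). -/

import Mathlib

open Finset

variable {n : ℕ} [NeZero n]

/-- Position of `x` in the cyclic order on `Fin n` starting at `i`. -/
def cpos (i x : Fin n) : ℕ := ((x - i : Fin n) : ℕ)

/-- `X ≪_i Y`: every element of `X \\ Y` precedes every element of `Y \\ X`
in the cyclic order starting at `i`. -/
def Ll (i : Fin n) (X Y : Finset (Fin n)) : Prop :=
  ∀ x ∈ X \ Y, ∀ y ∈ Y \ X, cpos i x < cpos i y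

/-- `X` and `Y` are weakly separated. -/
def WSep (X Y : Finset (Fin n)) : Prop := ∃ i : Fin n, Ll i X Y

/-- A Grassmann necklace in `C([n], r)`. -/
def IsNecklace (N : Fin n → Finset (Fin n)) (r : ℕ) : Prop :=
  (∀ i, (N i).card = r) ∧ ∀ i, (N i).erase i ⊆ N (i + 1)

/-- The interior of a necklace `N`: `r`-sets `X` with `N_i ≪_i X` for all `i`. -/
def Interior (r : ℕ) (N : Fin n → Finset (Fin n)) : Set (Finset (Fin n)) :=
  {X | X.card = r ∧ ∀ i, Ll i (N i) X}

open Fin.CommRing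

/-! ### Auxiliary lemmas about cyclic positions -/

lemma cpos_lt_n (i x : Fin n) : cpos i x < n := (x - i).isLt

lemma cpos_self (i : Fin n) : cpos i i = 0 := by simp [cpos]

lemma val_pos_of_ne_zero {v : Fin n} (h : v ≠ 0) : 0 < v.val := by
  have := (Fin.pos_iff_ne_zero' v).mpr h
  exact Nat.pos_of_ne_zero (fun h0 => h (Fin.ext h0))

lemma cpos_eq_zero {i x : Fin n} (h : cpos i x = 0) : x = i := by
  by_contra hne
  have h0 : x - i ≠ 0 := sub_ne_zero.mpr hne
  exact absurd h (Nat.pos_iff_ne_zero.mp (val_pos_of_ne_zero h0))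

lemma cpos_inj {i x y : Fin n} (h : cpos i x = cpos i y) : x = y := by
  have : x - i = y - i := Fin.ext h
  exact sub_left_inj.mp this

lemma val_sub_one {v : Fin n} (h : v ≠ 0) : (v - 1).val = v.val - 1 := by
  obtain ⟨m, rfl⟩ : ∃ m, n = m + 1 := ⟨n - 1, (Nat.succ_pred_eq_of_pos (NeZero.pos n)).symm⟩
  rw [Fin.coe_sub_one, if_neg h]

lemma cpos_succ {i x : Fin n} (h : x ≠ i) : cpos i x = cpos (i + 1) x + 1 := by
  have h0 : x - i ≠ 0 := sub_ne_zero.mpr h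
  have h1 : x - (i + 1) = (x - i) - 1 := by ring
  have h2 : ((x - i) - 1).val = (x - i).val - 1 := val_sub_one h0
  have h3 : 0 < (x - i).val := val_pos_of_ne_zero h0
  unfold cpos
  rw [h1]
  omega

lemma cpos_neg_one (y : Fin n) : cpos (y + 1) y = n - 1 := by
  obtain ⟨m, rfl⟩ : ∃ m, n = m + 1 := ⟨n - 1, (Nat.succ_pred_eq_of_pos (NeZero.pos n)).symm⟩
  have h : y - (y + 1) = -1 := by ring
  unfold cpos
  rw [h]
  simp

lemma cpos_add_formula (i j y : Fin n) : cpos j y = (cpos i y + cpos j i) % n := by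
  have h : y - j = (y - i) + (i - j) := by ring
  unfold cpos
  rw [h, Fin.val_add]

lemma cpos_antisymm {i j : Fin n} (h : i ≠ j) : cpos i j + cpos j i = n := by
  have h0 : (j - i) + (i - j) = 0 := by ring
  have h1 : ((j - i).val + (i - j).val) % n = 0 := by
    rw [← Fin.val_add, h0, Fin.val_zero]
  have h2 : 0 < (j - i).val := val_pos_of_ne_zero (sub_ne_zero.mpr (Ne.symm h))
  have h3 : (j - i).val < n := (j - i).isLt
  have h4 : (i - j).val < n := (i - j).isLt
  obtain ⟨c, hc⟩ := Nat.dvd_of_mod_eq_zero h1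
  unfold cpos
  rcases c with _ | _ | c
  · omega
  · omega
  · have : n * 2 ≤ n * (c + 1 + 1) := Nat.mul_le_mul_left n (by omega)
    omega

/-! ### Persistence in a necklace -/

lemma persist {N : Fin n → Finset (Fin n)} (hN : ∀ i, (N i).erase i ⊆ N (i + 1))
    {a z : Fin n} (hz : z ∈ N a) : ∀ m : Fin n, cpos a m ≤ cpos a z → z ∈ N m := by
  suffices h : ∀ k : ℕ, ∀ m : Fin n, cpos a m = k → cpos a m ≤ cpos a z → z ∈ N m by
    intro m hm; exact h _ m rfl hm
  intro k
  induction k with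
  | zero =>
    intro m h0 _
    rw [cpos_eq_zero h0]
    exact hz
  | succ k ih =>
    intro m hk hle
    have hma : m ≠ a := by
      intro h; subst h; rw [cpos_self] at hk; omega
    have hm1 : (m - 1) + 1 = m := by ring
    have hv : m - a ≠ 0 := sub_ne_zero.mpr hma
    have hc : cpos a (m - 1) = k := by
      have h1 : (m - 1) - a = (m - a) - 1 := by ring
      have h2 : ((m - a) - 1).val = (m - a).val - 1 := val_sub_one hv
      unfold cpos at hk ⊢
      rw [h1]
      omega
    have hz1 : z ∈ N (m - 1) := ih (m - 1) hc (by omega)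
    have hzm : z ≠ m - 1 := by
      intro h
      rw [← h] at hc
      omega
    have := hN (m - 1) (Finset.mem_erase.mpr ⟨hzm, hz1⟩)
    rwa [hm1] at this

/-- Every necklace set belongs to the interior of its own necklace. -/
lemma necklace_mem_self_interior {N : Fin n → Finset (Fin n)} {r : ℕ}
    (h : IsNecklace N r) (hi : ∀ i, i ∈ N i) (i : Fin n) : N i ∈ Interior r N := by
  refine ⟨h.1 i, fun j => ?_⟩
  intro x hx y hy
  rw [Finset.mem_sdiff] at hx hy
  rcases hx with ⟨hxj, hxi⟩
  rcases hy with ⟨hyi, hyj⟩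
  by_cases hij : i = j
  · subst hij; exact absurd hxj hxi
  have hx2 : cpos j x < cpos j i := by
    by_contra h'
    exact hxi (persist h.2 hxj i (by omega))
  have hy2 : cpos i y < cpos i j := by
    by_contra h'
    exact hyj (persist h.2 hyi j (by omega))
  have hsum : cpos i j + cpos j i = n := cpos_antisymm hij
  have hform : cpos j y = (cpos i y + cpos j i) % n := cpos_add_formula i j y
  have hlt : cpos i y + cpos j i < n := by omega
  rw [Nat.mod_eq_of_lt hlt] at hform
  have : 0 < cpos j i := by
    rcases Nat.eq_zero_or_pos (cpos j i) with h0 | h0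
    · exact absurd (cpos_eq_zero h0) hij
    · exact h0
  omega

/-- Key claim: if `X ∈ Int(N)`, `x ∈ X`, `y ∉ X`, then some necklace set contains `x`
but not `y`. -/
lemma claimQ {N : Fin n → Finset (Fin n)} {r : ℕ}
    (h : IsNecklace N r) (hi : ∀ i, i ∈ N i)
    {X : Finset (Fin n)} (hX : X ∈ Interior r N) {x y : Fin n}
    (hx : x ∈ X) (hy : y ∉ X) :
    ∃ m, x ∈ N m ∧ y ∉ N m := by
  by_contra hcon
  push_neg at hcon
  -- hcon : ∀ m, x ∈ N m → y ∈ N m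
  have step1 : ¬ (∀ m, y ∈ N m) := by
    intro hall
    have h1 : y ∈ N (y + 1) := hall _
    have h2 : Ll (y + 1) (N (y + 1)) X := hX.2 _
    have hXsub : X ⊆ N (y + 1) := by
      intro z hz
      by_contra hzn
      have hlt := h2 y (Finset.mem_sdiff.mpr ⟨h1, hy⟩) z (Finset.mem_sdiff.mpr ⟨hz, hzn⟩)
      have l1 : cpos (y + 1) y = n - 1 := cpos_neg_one y
      have l2 : cpos (y + 1) z < n := cpos_lt_n _ _
      have : 0 < n := NeZero.pos n
      omega
    have hEq : X = N (y + 1) :=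
      Finset.eq_of_subset_of_card_le hXsub (by rw [h.1, hX.1])
    exact hy (hEq ▸ h1)
  by_cases hA : x ∈ N (x + 1)
  · -- x persists everywhere
    apply step1
    intro m
    apply hcon
    apply persist h.2 hA m
    have := cpos_neg_one x
    have := cpos_lt_n (x + 1) m
    omega
  · -- x drops right after x; find the flip point
    have hflip : ∃ m₁, x ∉ N m₁ ∧ x ∈ N (m₁ + 1) := by
      by_contra hf
      push_neg at hf
      have hback : ∀ k : ℕ, x ∈ N (x - (k : Fin n)) := by
        intro k
        induction k with
        | zero => simpa using hi x
        | succ k ih =>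
          have hstep : (x - ((k + 1 : ℕ) : Fin n)) + 1 = x - (k : Fin n) := by
            push_cast
            ring
          by_contra hnot
          have := hf _ hnot
          rw [hstep] at this
          exact this ih
      have hcast : x - ((n - 1 : ℕ) : Fin n) = x + 1 := by
        have h1 : ((n - 1 : ℕ) : Fin n) = -1 := by
          have hn : 1 ≤ n := NeZero.pos n
          push_cast [Nat.cast_sub hn]
          rw [Fin.natCast_self]
          ring
        rw [h1]
        ring
      have := hback (n - 1)
      rw [hcast] at this
      exact hA this
    obtain ⟨m₁, hxm₁, hxm₀⟩ := hflip
    set m₀ := m₁ + 1 with hm₀def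
    have hxne : x ≠ m₁ := fun h' => hxm₁ (h' ▸ hi x)
    have hym₀ : y ∈ N m₀ := hcon m₀ hxm₀
    -- N m₀ = insert x (erase (N m₁) m₁)
    have hrpos : 0 < r := by
      have := Finset.card_pos.mpr ⟨m₁, hi m₁⟩
      rwa [h.1 m₁] at this
    have hxer : x ∉ (N m₁).erase m₁ := fun hmem => hxm₁ (Finset.mem_of_mem_erase hmem)
    have hsub : insert x ((N m₁).erase m₁) ⊆ N m₀ := by
      intro z hz
      rcases Finset.mem_insert.mp hz with rfl | hz
      · exact hxm₀
      · exact h.2 m₁ hz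
    have hcard2 : (insert x ((N m₁).erase m₁)).card = r := by
      rw [Finset.card_insert_of_notMem hxer, Finset.card_erase_of_mem (hi m₁), h.1 m₁]
      omega
    have heq : insert x ((N m₁).erase m₁) = N m₀ :=
      Finset.eq_of_subset_of_card_le hsub (by rw [h.1 m₀, hcard2])
    have hyx : y ≠ x := fun h' => hy (h' ▸ hx)
    have hyer : y ∈ (N m₁).erase m₁ := by
      have := heq ▸ hym₀
      rcases Finset.mem_insert.mp this with h' | h'
      · exact absurd h' hyx
      · exact h'
    have hym₁ : y ∈ N m₁ := Finset.mem_of_mem_erase hyer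
    have hynem₁ : y ≠ m₁ := Finset.ne_of_mem_erase hyer
    rcases le_or_gt (cpos m₀ y) (cpos m₀ x) with hbr | hbr
    · -- y persists everywhere, contradiction via step1
      have hylt : cpos m₀ y < cpos m₀ x := by
        rcases lt_or_eq_of_le hbr with h' | h'
        · exact h'
        · exact absurd (cpos_inj h') hyx
      have hxpos : 0 < cpos m₀ x := by omega
      have hxnem₀ : x ≠ m₀ := by
        intro h'
        rw [h', cpos_self] at hxpos
        omega
      have hsum : cpos m₀ x + cpos x m₀ = n := cpos_antisymm (Ne.symm hxnem₀)
      have hyNx : y ∈ N x := hcon x (hi x)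
      apply step1
      intro m
      by_cases hc : cpos m₀ m ≤ cpos m₀ x
      · exact hcon m (persist h.2 hxm₀ m hc)
      · apply persist h.2 hyNx m
        have e1 : cpos x y = (cpos m₀ y + cpos x m₀) % n := cpos_add_formula m₀ x y
        have e2 : cpos x m = (cpos m₀ m + cpos x m₀) % n := cpos_add_formula m₀ x m
        have hy1 : cpos m₀ y + cpos x m₀ < n := by omega
        rw [Nat.mod_eq_of_lt hy1] at e1
        have hmge : n ≤ cpos m₀ m + cpos x m₀ := by omega
        have hmlt : cpos m₀ m + cpos x m₀ - n < n := by
          have := cpos_lt_n m₀ m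
          omega
        have e2' : cpos x m = cpos m₀ m + cpos x m₀ - n := by
          rw [e2, Nat.mod_eq_sub_mod hmge, Nat.mod_eq_of_lt hmlt]
        have := cpos_lt_n m₀ m
        omega
    · -- order contradiction via Ll m₁ (N m₁) X
      have hlt := hX.2 m₁ y (Finset.mem_sdiff.mpr ⟨hym₁, hy⟩) x
        (Finset.mem_sdiff.mpr ⟨hx, hxm₁⟩)
      have e1 : cpos m₁ y = cpos m₀ y + 1 := by
        rw [cpos_succ hynem₁]
      have e2 : cpos m₁ x = cpos m₀ x + 1 := by
        rw [cpos_succ hxne]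
      omega

/-- Lemma 3: `Int(N₁) ⊆ Int(N₂)` iff every set of the necklace `N₁` belongs
to `Int(N₂)`. -/
theorem necklace_interior_subset_iff (N₁ N₂ : Fin n → Finset (Fin n)) (r : ℕ)
    (h1 : IsNecklace N₁ r) (h2 : IsNecklace N₂ r)
    (hi1 : ∀ i, i ∈ N₁ i) (hi2 : ∀ i, i ∈ N₂ i) :
    Interior r N₁ ⊆ Interior r N₂ ↔ ∀ i, N₁ i ∈ Interior r N₂ := by
  constructor
  · intro hsub i
    exact hsub (necklace_mem_self_interior h1 hi1 i)
  · intro hN1 X hX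
    refine ⟨hX.1, fun i => ?_⟩
    intro x' hx' y' hy'
    rw [Finset.mem_sdiff] at hx' hy'
    by_contra hle
    push_neg at hle
    obtain ⟨m, hm1, hm2⟩ := claimQ h1 hi1 hX hy'.1 hx'.2
    have := (hN1 m).2 i x' (Finset.mem_sdiff.mpr ⟨hx'.1, hm2⟩) y'
      (Finset.mem_sdiff.mpr ⟨hm1, hy'.2⟩)
    omega
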